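/- The map c ↦ CanonTop(c) is a bijection from the set of minimal recurrent configurations of the ASM on a permutation graph G_π with sink s to the set of (π,s)-compatible ordered partitions of [n]. -/

import Mathlib

open Finset
open scoped Classical

def permGraph {n : ℕ} (π : Equiv.Perm (Fin n)) : SimpleGraph (Fin n) :=
  SimpleGraph.fromRel (fun i j => i < j ∧ π.symm j < π.symm i)

noncomputable def topple {n : ℕ} (G : SimpleGraph (Fin n)) (c : Fin n → ℕ) (i : Fin n) :
    Fin n → ℕ :=
  fun j => if j = i then c j - G.degree i else c j + (if G.Adj i j then 1 else 0)

noncomputable def toppleList {n : ℕ} (G : SimpleGraph (Fin n)) (c : Fin n → ℕ) :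
    List (Fin n) → (Fin n → ℕ)
  | [] => c
  | i :: l => toppleList G (topple G c i) l

def ValidTopplings {n : ℕ} (G : SimpleGraph (Fin n)) (c : Fin n → ℕ) :
    List (Fin n) → Prop
  | [] => True
  | i :: l => G.degree i ≤ c i ∧ ValidTopplings G (topple G c i) l

def IsRecurrent {n : ℕ} (G : SimpleGraph (Fin n)) (s : Fin n) (c : Fin n → ℕ) : Prop :=
  c s = G.degree s ∧ (∀ i, i ≠ s → c i < G.degree i) ∧
    ∃ l : List (Fin n), l.head? = some s ∧ l.Nodup ∧ (∀ v, v ∈ l) ∧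
      ValidTopplings G c l ∧ toppleList G c l = c

noncomputable def level {n : ℕ} (G : SimpleGraph (Fin n)) (c : Fin n → ℕ) : ℤ :=
  (∑ i, (c i : ℤ)) - (G.edgeFinset.card : ℤ)

noncomputable def confAfterSet {n : ℕ} (G : SimpleGraph (Fin n)) (c : Fin n → ℕ)
    (D : Finset (Fin n)) (i : Fin n) : ℤ :=
  (c i : ℤ) + ((D.filter (G.Adj i)).card : ℤ) - (if i ∈ D then (G.degree i : ℤ) else 0)

noncomputable def canonTopCum {n : ℕ} (G : SimpleGraph (Fin n)) (s : Fin n)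
    (c : Fin n → ℕ) : ℕ → Finset (Fin n)
  | 0 => {s}
  | k + 1 => canonTopCum G s c k ∪
      Finset.univ.filter (fun i => i ∉ canonTopCum G s c k ∧
        (G.degree i : ℤ) ≤ confAfterSet G c (canonTopCum G s c k) i)

/-- The canonical toppling of `c`: `P 0 = {s}` and `P (k+1)` is the set of (non-sink)
vertices becoming unstable after toppling all of `P 0, …, P k`. -/
noncomputable def canonTopPart {n : ℕ} (G : SimpleGraph (Fin n)) (s : Fin n)
    (c : Fin n → ℕ) : ℕ → Finset (Fin n)
  | 0 => {s}
  | k + 1 => canonTopCum G s c (k + 1) \ canonTopCum G s c k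

/-- `P 0, …, P k` is a `(π, s)`-compatible ordered partition of `[n]`:
`P 0 = {s}`; the parts are nonempty, pairwise disjoint, cover everything (and `P j`
is empty for `j > k`); no two elements of a part form an inversion of `π`; and every
element of `P j` (`j ≥ 1`) forms an inversion with some element of `P (j-1)`. -/
def IsCompatiblePartition {n : ℕ} (π : Equiv.Perm (Fin n)) (s : Fin n)
    (P : ℕ → Finset (Fin n)) (k : ℕ) : Prop :=
  P 0 = {s} ∧
  (∀ j, j ≤ k → (P j).Nonempty) ∧
  (∀ j, k < j → P j = ∅) ∧
  (∀ i j, i < j → Disjoint (P i) (P j)) ∧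
  (Finset.range (k + 1)).biUnion P = Finset.univ ∧
  (∀ j, j ≤ k → ∀ a ∈ P j, ∀ b ∈ P j, ¬ (permGraph π).Adj a b) ∧
  (∀ j, 1 ≤ j → j ≤ k → ∀ a ∈ P j, ∃ b ∈ P (j - 1), (permGraph π).Adj a b)

variable {n : ℕ} {G : SimpleGraph (Fin n)}

lemma toppleList_append (c : Fin n → ℕ) (a b : List (Fin n)) :
    toppleList G c (a ++ b) = toppleList G (toppleList G c a) b := by
  induction a generalizing c with
  | nil => rfl
  | cons i a ih => simp [toppleList, ih]

lemma toppleList_not_mem (c : Fin n → ℕ) (l : List (Fin n)) (v : Fin n) (hv : v ∉ l) :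
    toppleList G c l v = c v + (l.filter (fun i => G.Adj i v)).length := by
  induction l generalizing c with
  | nil => simp [toppleList]
  | cons i l ih =>
    have hvi : v ≠ i := by rintro rfl; simp at hv
    have hvl : v ∉ l := fun h => hv (List.mem_cons_of_mem _ h)
    rw [toppleList, ih _ hvl]
    simp only [topple, if_neg hvi, List.filter_cons]
    by_cases h : G.Adj i v <;> simp [h] <;> omega

lemma valid_decomp (c : Fin n → ℕ) (l1 : List (Fin n)) (v : Fin n) (l2 : List (Fin n))
    (hvalid : ValidTopplings G c (l1 ++ v :: l2)) (hv : v ∉ l1) :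
    G.degree v ≤ c v + (l1.filter (fun i => G.Adj i v)).length := by
  induction l1 generalizing c with
  | nil => simpa using hvalid.1
  | cons i l1 ih =>
    have hvi : v ≠ i := by rintro rfl; simp at hv
    have hvl : v ∉ l1 := fun h => hv (List.mem_cons_of_mem _ h)
    have := ih (topple G c i) hvalid.2 hvl
    simp only [topple, if_neg hvi] at this
    simp only [List.filter_cons]
    by_cases h : G.Adj i v <;> simp [h] at this ⊢ <;> omega

lemma valid_of (c : Fin n → ℕ) (l : List (Fin n)) (hnd : l.Nodup)
    (h : ∀ l1 v l2, l = l1 ++ v :: l2 →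
      G.degree v ≤ c v + (l1.filter (fun i => G.Adj i v)).length) :
    ValidTopplings G c l := by
  induction l generalizing c with
  | nil => trivial
  | cons i l ih =>
    constructor
    · simpa using h [] i l rfl
    · refine ih (topple G c i) hnd.of_cons ?_
      intro l1 v l2 hl
      have hvi : v ≠ i := by
        rintro rfl
        exact (List.nodup_cons.1 hnd).1 (hl ▸ (by simp : v ∈ l1 ++ v :: l2))
      have := h (i :: l1) v l2 (by rw [hl]; rfl)
      simp only [List.filter_cons] at this
      simp only [topple, if_neg hvi]
      by_cases hadj : G.Adj i v <;> simp [hadj] at this ⊢ <;> omega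

lemma degree_eq_filter (v : Fin n) :
    G.degree v = (Finset.univ.filter (fun u => G.Adj u v)).card := by
  rw [← SimpleGraph.card_neighborFinset_eq_degree, SimpleGraph.neighborFinset_eq_filter]
  congr 1
  ext u
  simp [G.adj_comm]

lemma filter_length_of_missing (m : List (Fin n)) (v : Fin n) (hnd : m.Nodup)
    (hv : v ∉ m) (hall : ∀ u, u ≠ v → u ∈ m) :
    (m.filter (fun i => G.Adj i v)).length = G.degree v := by
  have h1 : (m.filter (fun i => G.Adj i v)).toFinset
      = m.toFinset.filter (fun i => G.Adj i v) := by
    simpa using List.toFinset_filter m (fun i => decide (G.Adj i v))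
  have hnd' : (m.filter (fun i => G.Adj i v)).Nodup := hnd.filter _
  rw [← List.toFinset_card_of_nodup hnd', h1]
  have h2 : m.toFinset = Finset.univ.erase v := by
    ext u
    simp only [List.mem_toFinset, Finset.mem_erase, Finset.mem_univ, and_true]
    constructor
    · rintro hu rfl; exact hv hu
    · exact fun h => hall u h
  rw [h2, degree_eq_filter]
  congr 1
  ext u
  simp only [Finset.mem_filter, Finset.mem_erase, Finset.mem_univ, and_true, true_and]
  constructor
  · rintro ⟨_, h⟩; exact h
  · intro h; exact ⟨fun he => by subst he; exact G.irrefl h, h⟩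

lemma toppleList_eq_self (c : Fin n → ℕ) (l : List (Fin n)) (hnd : l.Nodup)
    (hall : ∀ v, v ∈ l) (hvalid : ValidTopplings G c l) :
    toppleList G c l = c := by
  funext v
  obtain ⟨l1, l2, rfl⟩ := List.append_of_mem (hall v)
  have hv1 : v ∉ l1 := by
    intro h
    exact (List.nodup_append.1 hnd).2.2 v h v (by simp) rfl
  have hv2 : v ∉ l2 := by
    have := (List.nodup_append.1 hnd).2.1
    simp only [List.nodup_cons] at this
    exact this.1
  set c1 := toppleList G c l1 with hc1
  have hc1v : c1 v = c v + (l1.filter (fun i => G.Adj i v)).length :=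
    toppleList_not_mem c l1 v hv1
  have hdeg : G.degree v ≤ c v + (l1.filter (fun i => G.Adj i v)).length :=
    valid_decomp c l1 v l2 hvalid hv1
  have hcount : (l1.filter (fun i => G.Adj i v)).length
      + (l2.filter (fun i => G.Adj i v)).length = G.degree v := by
    have hnd' : (l1 ++ l2).Nodup := hnd.sublist (by simp [List.Sublist.append_left])
    have := filter_length_of_missing (G := G) (l1 ++ l2) v hnd' (by simp [hv1, hv2])
      (fun u hu => by
        have := hall u
        simp only [List.mem_append, List.mem_cons] at this ⊢
        rcases this with h | h | h
        · exact Or.inl h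
        · exact absurd h hu
        · exact Or.inr h)
    simpa [List.filter_append] using this
  rw [toppleList_append, ← hc1, toppleList, toppleList_not_mem _ l2 v hv2]
  simp only [topple, if_pos rfl, hc1v, if_true]
  omega

section Cum
variable {n : ℕ} (G : SimpleGraph (Fin n)) (s : Fin n) (c : Fin n → ℕ)

lemma C_subset_succ (k : ℕ) : canonTopCum G s c k ⊆ canonTopCum G s c (k + 1) := by
  rw [canonTopCum]; exact Finset.subset_union_left

lemma C_mono {k m : ℕ} (h : k ≤ m) : canonTopCum G s c k ⊆ canonTopCum G s c m := by
  induction m with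
  | zero => simp_all
  | succ m ih =>
    rcases Nat.lt_or_ge k (m+1) with h' | h'
    · exact (ih (Nat.lt_succ_iff.1 h')).trans (C_subset_succ G s c m)
    · have : k = m + 1 := le_antisymm h h'
      subst this; rfl

lemma mem_C_succ_iff (i : Fin n) (k : ℕ) :
    i ∈ canonTopCum G s c (k + 1) ↔ i ∈ canonTopCum G s c k ∨
      (i ∉ canonTopCum G s c k ∧
        (G.degree i : ℤ) ≤ (c i : ℤ) + (((canonTopCum G s c k).filter (G.Adj i)).card : ℤ)) := by
  rw [canonTopCum]
  simp only [Finset.mem_union, Finset.mem_filter, Finset.mem_univ, true_and]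
  constructor
  · rintro (h | ⟨h1, h2⟩)
    · exact Or.inl h
    · refine Or.inr ⟨h1, ?_⟩
      rw [confAfterSet, if_neg h1] at h2; linarith
  · rintro (h | ⟨h1, h2⟩)
    · exact Or.inl h
    · refine Or.inr ⟨h1, ?_⟩
      rw [confAfterSet, if_neg h1]; linarith

lemma C_fix {k : ℕ} (h : canonTopCum G s c (k + 1) = canonTopCum G s c k) :
    ∀ m, k ≤ m → canonTopCum G s c m = canonTopCum G s c k := by
  intro m hm
  induction m with
  | zero => rw [Nat.le_zero.1 hm]
  | succ m ih =>
    rcases Nat.lt_or_ge k (m+1) with h' | h'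
    · have hm' : k ≤ m := Nat.lt_succ_iff.1 h'
      have he : canonTopCum G s c m = canonTopCum G s c k := ih hm'
      calc canonTopCum G s c (m+1)
          = canonTopCum G s c m ∪ _ := by rw [canonTopCum]
        _ = canonTopCum G s c k ∪ _ := by rw [he]
        _ = canonTopCum G s c (k+1) := by rw [canonTopCum]
        _ = canonTopCum G s c k := h
    · rw [le_antisymm hm h']

lemma C_exists_fix : ∃ k, canonTopCum G s c (k + 1) = canonTopCum G s c k := by
  by_contra hc
  push_neg at hc
  have hcard : ∀ k, k + 1 ≤ (canonTopCum G s c k).card := by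
    intro k
    induction k with
    | zero => simp [canonTopCum]
    | succ k ih =>
      have hss : canonTopCum G s c k ⊂ canonTopCum G s c (k+1) :=
        Finset.ssubset_iff_subset_ne.2 ⟨C_subset_succ G s c k, fun h => hc k h.symm⟩
      have := Finset.card_lt_card hss
      omega
  have h1 := hcard n
  have h2 : (canonTopCum G s c n).card ≤ n := by
    simpa using Finset.card_le_univ (canonTopCum G s c n)
  omega

end Cum

section Exhaust
variable {n : ℕ} {G : SimpleGraph (Fin n)} {s : Fin n} {c : Fin n → ℕ}

lemma list_count_le_card (l : List (Fin n)) (hnd : l.Nodup) (F : Finset (Fin n))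
    (hF : ∀ u ∈ l, u ∈ F) (v : Fin n) :
    (l.filter (fun i => G.Adj i v)).length ≤ (F.filter (G.Adj v)).card := by
  have hnd' : (l.filter (fun i => G.Adj i v)).Nodup := hnd.filter _
  rw [← List.toFinset_card_of_nodup hnd']
  apply Finset.card_le_card
  intro u hu
  simp only [List.mem_toFinset, List.mem_filter, decide_eq_true_eq] at hu
  exact Finset.mem_filter.2 ⟨hF u hu.1, G.adj_symm hu.2⟩

lemma exhaust (hrec : IsRecurrent G s c) : ∀ v, ∃ k, v ∈ canonTopCum G s c k := by
  obtain ⟨k0, hfix⟩ := C_exists_fix G s c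
  suffices h : canonTopCum G s c k0 = Finset.univ by
    exact fun v => ⟨k0, h ▸ Finset.mem_univ v⟩
  by_contra hne
  obtain ⟨l, _, hnd, hall, hvalid, _⟩ := hrec.2.2
  set F := canonTopCum G s c k0 with hF
  have hex : ∃ v, v ∉ F := by
    by_contra h
    push_neg at h
    exact hne (Finset.eq_univ_iff_forall.2 h)
  obtain ⟨v, hv⟩ := hex
  set p : Fin n → Bool := fun u => decide (u ∈ F) with hp
  have hsplit : l.takeWhile p ++ l.dropWhile p = l := List.takeWhile_append_dropWhile (p := p) (l := l)
  have hdne : l.dropWhile p ≠ [] := by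
    intro h
    have : v ∈ l.takeWhile p := by rw [← hsplit] at hall; simpa [h] using hall v
    have := List.mem_takeWhile_imp this
    simp [hp] at this
    exact hv this
  set w := (l.dropWhile p).head hdne with hwdef
  set rest := (l.dropWhile p).tail with hrest
  have hwrest : l.dropWhile p = w :: rest := (List.cons_head_tail hdne).symm
  have hwF : w ∉ F := by
    have := List.head_dropWhile_not p (l := l) hdne
    simpa [hp, ← hwdef] using this
  have hdecomp : l = l.takeWhile p ++ w :: rest := by conv_lhs => rw [← hsplit, hwrest]
  have hwl1 : w ∉ l.takeWhile p := fun h => hwF (by simpa [hp] using List.mem_takeWhile_imp h)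
  have hvalid' : ValidTopplings G c (l.takeWhile p ++ w :: rest) := by
    rw [← hdecomp]; exact hvalid
  have hkey : G.degree w ≤ c w + ((l.takeWhile p).filter (fun i => G.Adj i w)).length :=
    valid_decomp c _ w rest hvalid' hwl1
  have hcle : ((l.takeWhile p).filter (fun i => G.Adj i w)).length ≤ (F.filter (G.Adj w)).card :=
    list_count_le_card _ (hnd.sublist (List.takeWhile_sublist p)) F
      (fun u hu => by simpa [hp] using List.mem_takeWhile_imp hu) w
  have hcond : (G.degree w : ℤ) ≤ (c w : ℤ) + ((F.filter (G.Adj w)).card : ℤ) := by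
    push_cast
    omega
  have hw1 : w ∈ canonTopCum G s c (k0 + 1) :=
    (mem_C_succ_iff G s c w k0).2 (Or.inr ⟨hwF, hcond⟩)
  rw [hfix] at hw1
  exact hwF hw1

end Exhaust

noncomputable def rnk {n : ℕ} (G : SimpleGraph (Fin n)) (s : Fin n) (c : Fin n → ℕ)
    (v : Fin n) : ℕ :=
  if h : ∃ k, v ∈ canonTopCum G s c k then Nat.find h else 0

noncomputable def eltf {n : ℕ} (G : SimpleGraph (Fin n)) (r : Fin n → ℕ) (v : Fin n) : ℕ :=
  (Finset.univ.filter (fun u => G.Adj v u ∧ r u < r v)).card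

noncomputable def eeqf {n : ℕ} (G : SimpleGraph (Fin n)) (r : Fin n → ℕ) (v : Fin n) : ℕ :=
  (Finset.univ.filter (fun u => G.Adj v u ∧ r u = r v)).card

noncomputable def egtf {n : ℕ} (G : SimpleGraph (Fin n)) (r : Fin n → ℕ) (v : Fin n) : ℕ :=
  (Finset.univ.filter (fun u => G.Adj v u ∧ r v < r u)).card

noncomputable abbrev eltc {n : ℕ} (G : SimpleGraph (Fin n)) (s : Fin n) (c : Fin n → ℕ) :=
  eltf G (rnk G s c)

noncomputable abbrev eeqc {n : ℕ} (G : SimpleGraph (Fin n)) (s : Fin n) (c : Fin n → ℕ) :=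
  eeqf G (rnk G s c)

noncomputable abbrev egtc {n : ℕ} (G : SimpleGraph (Fin n)) (s : Fin n) (c : Fin n → ℕ) :=
  egtf G (rnk G s c)

section Rank
variable {n : ℕ} {G : SimpleGraph (Fin n)} {s : Fin n} {c : Fin n → ℕ}

lemma mem_C_iff_rnk (hex : ∀ v, ∃ k, v ∈ canonTopCum G s c k) (v : Fin n) (k : ℕ) :
    v ∈ canonTopCum G s c k ↔ rnk G s c v ≤ k := by
  rw [rnk, dif_pos (hex v)]
  constructor
  · exact fun h => Nat.find_min' _ h
  · exact fun h => C_mono G s c h (Nat.find_spec (hex v))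

lemma rnk_spec (hex : ∀ v, ∃ k, v ∈ canonTopCum G s c k) (v : Fin n) :
    v ∈ canonTopCum G s c (rnk G s c v) :=
  (mem_C_iff_rnk hex v _).2 le_rfl

lemma rnk_eq_zero_iff (hex : ∀ v, ∃ k, v ∈ canonTopCum G s c k) (v : Fin n) :
    rnk G s c v = 0 ↔ v = s := by
  rw [← Nat.le_zero, ← mem_C_iff_rnk hex]
  simp [canonTopCum]

lemma key_ineq (hex : ∀ v, ∃ k, v ∈ canonTopCum G s c k) (hcs : c s = G.degree s) (v : Fin n) :
    (G.degree v : ℤ) ≤ (c v : ℤ) + (eltc G s c v : ℤ) := by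
  rcases Nat.eq_zero_or_pos (rnk G s c v) with hr | hr
  · have hv : v = s := (rnk_eq_zero_iff hex v).1 hr
    have : eltc G s c v = 0 := by
      rw [eltc, eltf, Finset.card_eq_zero, Finset.filter_eq_empty_iff]
      intro u _
      rw [hr]
      simp
    rw [this, hv, hcs]
    simp
  · obtain ⟨j, hj⟩ : ∃ j, rnk G s c v = j + 1 := ⟨rnk G s c v - 1, by omega⟩
    have hmem : v ∈ canonTopCum G s c (j + 1) := hj ▸ rnk_spec hex v
    have hnot : v ∉ canonTopCum G s c j := by
      rw [mem_C_iff_rnk hex, hj]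
      omega
    rcases (mem_C_succ_iff G s c v j).1 hmem with h | ⟨_, h⟩
    · exact absurd h hnot
    · have hfe : (canonTopCum G s c j).filter (G.Adj v)
          = Finset.univ.filter (fun u => G.Adj v u ∧ rnk G s c u < rnk G s c v) := by
        ext u
        simp only [Finset.mem_filter, Finset.mem_univ, true_and]
        rw [mem_C_iff_rnk hex, hj]
        constructor
        · rintro ⟨h1, h2⟩; exact ⟨h2, by omega⟩
        · rintro ⟨h1, h2⟩; exact ⟨by omega, h1⟩
      rw [eltc, eltf, ← hfe]
      exact h

lemma elt_add_eq_deg {r : Fin n → ℕ} (v : Fin n) :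
    eltf G r v + eeqf G r v + egtf G r v = G.degree v := by
  rw [eltf, eeqf, egtf, ← SimpleGraph.card_neighborFinset_eq_degree,
    SimpleGraph.neighborFinset_eq_filter, Finset.card_filter, Finset.card_filter,
    Finset.card_filter, Finset.card_filter, ← Finset.sum_add_distrib, ← Finset.sum_add_distrib]
  apply Finset.sum_congr rfl
  intro u _
  by_cases hadj : G.Adj v u
  · simp only [hadj, true_and, if_pos]
    split_ifs <;> omega
  · simp [hadj]

lemma sum_elt_eq_sum_egt {r : Fin n → ℕ} :
    ∑ v, eltf G r v = ∑ v, egtf G r v := by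
  simp only [eltf, egtf, Finset.card_filter]
  rw [Finset.sum_comm]
  apply Finset.sum_congr rfl
  intro u _
  apply Finset.sum_congr rfl
  intro v _
  congr 1
  rw [G.adj_comm]

lemma minimal_structure (hex : ∀ v, ∃ k, v ∈ canonTopCum G s c k) (hcs : c s = G.degree s)
    (hlev : level G c = 0) :
    (∀ v, eeqc G s c v = 0) ∧ ∀ v, (c v : ℤ) = (G.degree v : ℤ) - (eltc G s c v : ℤ) := by
  have hsumc : ∑ v, (c v : ℤ) = (G.edgeFinset.card : ℤ) := by
    rw [level] at hlev
    omega
  have hsumdeg : ∑ v, (G.degree v : ℤ) = 2 * (G.edgeFinset.card : ℤ) := by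
    have := SimpleGraph.sum_degrees_eq_twice_card_edges G
    exact_mod_cast congrArg (Nat.cast : ℕ → ℤ) this
  have hdecomp : ∀ v, (eltc G s c v : ℤ) + eeqc G s c v + egtc G s c v = G.degree v := by
    intro v
    exact_mod_cast congrArg (Nat.cast : ℕ → ℤ) (elt_add_eq_deg (G := G) (r := rnk G s c) v)
  have helteq : ∑ v, (eltc G s c v : ℤ) = ∑ v, (egtc G s c v : ℤ) := by
    exact_mod_cast congrArg (Nat.cast : ℕ → ℤ) (sum_elt_eq_sum_egt (G := G) (r := rnk G s c))
  have hsum3 : ∑ v, ((eltc G s c v : ℤ) + eeqc G s c v + egtc G s c v)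
      = 2 * (G.edgeFinset.card : ℤ) := by
    rw [Finset.sum_congr rfl (fun v _ => hdecomp v), hsumdeg]
  have hsplit3 : ∑ v, ((eltc G s c v : ℤ) + eeqc G s c v + egtc G s c v)
      = ∑ v, (eltc G s c v : ℤ) + ∑ v, (eeqc G s c v : ℤ) + ∑ v, (egtc G s c v : ℤ) := by
    rw [Finset.sum_add_distrib, Finset.sum_add_distrib]
  have hterm : ∀ v ∈ (Finset.univ : Finset (Fin n)),
      0 ≤ (c v : ℤ) + (eltc G s c v : ℤ) - (G.degree v : ℤ) := by
    intro v _
    have := key_ineq hex hcs v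
    omega
  have hT : ∑ v, ((c v : ℤ) + (eltc G s c v : ℤ) - (G.degree v : ℤ))
      = ∑ v, (eltc G s c v : ℤ) - (G.edgeFinset.card : ℤ) := by
    rw [Finset.sum_sub_distrib, Finset.sum_add_distrib, hsumc, hsumdeg]
    ring
  have heeq_nonneg : (0 : ℤ) ≤ ∑ v, (eeqc G s c v : ℤ) :=
    Finset.sum_nonneg (fun v _ => by positivity)
  have hTnonneg : 0 ≤ ∑ v, ((c v : ℤ) + (eltc G s c v : ℤ) - (G.degree v : ℤ)) :=
    Finset.sum_nonneg hterm
  have h2T : 2 * (∑ v, (eltc G s c v : ℤ)) + ∑ v, (eeqc G s c v : ℤ)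
      = 2 * (G.edgeFinset.card : ℤ) := by
    rw [hsplit3] at hsum3
    linarith [helteq]
  have hTzero1 : ∑ v, ((c v : ℤ) + (eltc G s c v : ℤ) - (G.degree v : ℤ)) = 0 := by
    linarith [hT, hTnonneg, heeq_nonneg, h2T]
  have hTzero2 : ∑ v, (eeqc G s c v : ℤ) = 0 := by
    linarith [hT, hTnonneg, heeq_nonneg, h2T]
  refine ⟨fun v => ?_, fun v => ?_⟩
  · have := (Finset.sum_eq_zero_iff_of_nonneg (fun v _ => by positivity)).1 hTzero2 v
      (Finset.mem_univ v)
    exact_mod_cast this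
  · have := (Finset.sum_eq_zero_iff_of_nonneg hterm).1 hTzero1 v (Finset.mem_univ v)
    omega

end Rank

def IsCompatG {n : ℕ} (G : SimpleGraph (Fin n)) (s : Fin n)
    (P : ℕ → Finset (Fin n)) (k : ℕ) : Prop :=
  P 0 = {s} ∧
  (∀ j, j ≤ k → (P j).Nonempty) ∧
  (∀ j, k < j → P j = ∅) ∧
  (∀ i j, i < j → Disjoint (P i) (P j)) ∧
  (Finset.range (k + 1)).biUnion P = Finset.univ ∧
  (∀ j, j ≤ k → ∀ a ∈ P j, ∀ b ∈ P j, ¬ G.Adj a b) ∧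
  (∀ j, 1 ≤ j → j ≤ k → ∀ a ∈ P j, ∃ b ∈ P (j - 1), G.Adj a b)

section Forward
variable {n : ℕ} {G : SimpleGraph (Fin n)} {s : Fin n} {c : Fin n → ℕ}

lemma P_subset_C (k : ℕ) : canonTopPart G s c k ⊆ canonTopCum G s c k := by
  cases k with
  | zero => rw [canonTopPart, canonTopCum]
  | succ m => rw [canonTopPart]; exact Finset.sdiff_subset

lemma C_eq_biUnion (k : ℕ) :
    canonTopCum G s c k = (Finset.range (k + 1)).biUnion (canonTopPart G s c) := by
  induction k with
  | zero => simp [canonTopCum, canonTopPart]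
  | succ k ih =>
    rw [Finset.range_add_one, Finset.biUnion_insert, ← ih, canonTopPart,
      Finset.union_comm, Finset.union_sdiff_of_subset (C_subset_succ G s c k)]

lemma exhaust_univ (hrec : IsRecurrent G s c) : ∃ k, canonTopCum G s c k = Finset.univ := by
  have hex := exhaust hrec
  refine ⟨Finset.univ.sup (rnk G s c), Finset.eq_univ_iff_forall.2 fun v => ?_⟩
  exact C_mono G s c (Finset.le_sup (Finset.mem_univ v)) (rnk_spec hex v)

lemma mem_P_iff (hex : ∀ v, ∃ k, v ∈ canonTopCum G s c k) (v : Fin n) (j : ℕ) :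
    v ∈ canonTopPart G s c j ↔ rnk G s c v = j := by
  cases j with
  | zero =>
    rw [canonTopPart, Finset.mem_singleton, rnk_eq_zero_iff hex]
  | succ m =>
    rw [canonTopPart, Finset.mem_sdiff, mem_C_iff_rnk hex, mem_C_iff_rnk hex]
    omega

lemma forward_compat (hrec : IsRecurrent G s c) (hlev : level G c = 0) :
    ∃ k, IsCompatG G s (canonTopPart G s c) k := by
  have hexu : ∃ k, canonTopCum G s c k = Finset.univ := exhaust_univ hrec
  obtain ⟨hcs, hstab, -⟩ := hrec
  have hex : ∀ v, ∃ k, v ∈ canonTopCum G s c k :=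
    fun v => ⟨Nat.find hexu, by rw [Nat.find_spec hexu]; exact Finset.mem_univ v⟩
  obtain ⟨heeq, hform⟩ := minimal_structure hex hcs hlev
  set K := Nat.find hexu with hK
  have hCK : canonTopCum G s c K = Finset.univ := Nat.find_spec hexu
  refine ⟨K, rfl, ?_, ?_, ?_, ?_, ?_, ?_⟩
  · -- nonempty
    intro j hj
    cases j with
    | zero => exact ⟨s, by rw [canonTopPart]; exact Finset.mem_singleton_self s⟩
    | succ m =>
      rw [canonTopPart, Finset.sdiff_nonempty]
      intro hsub
      have heq : canonTopCum G s c (m + 1) = canonTopCum G s c m :=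
        Finset.Subset.antisymm hsub (C_subset_succ G s c m)
      have : canonTopCum G s c K = canonTopCum G s c m := C_fix G s c heq K (by omega)
      exact Nat.find_min hexu (show m < K by omega) (this ▸ hCK)
  · -- empty beyond K
    intro j hj
    obtain ⟨m, rfl⟩ : ∃ m, j = m + 1 := ⟨j - 1, by omega⟩
    rw [canonTopPart, Finset.sdiff_eq_empty_iff_subset]
    intro x hx
    have hx' : x ∈ canonTopCum G s c K := by rw [hCK]; exact Finset.mem_univ x
    exact C_mono G s c (show K ≤ m by omega) hx'
  · -- disjoint
    intro i j hij
    obtain ⟨m, rfl⟩ : ∃ m, j = m + 1 := ⟨j - 1, by omega⟩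
    have h1 : canonTopPart G s c i ⊆ canonTopCum G s c m :=
      (P_subset_C i).trans (C_mono G s c (by omega))
    rw [canonTopPart]
    exact Finset.disjoint_of_subset_left h1 Finset.disjoint_sdiff
  · -- cover
    rw [← C_eq_biUnion, hCK]
  · -- independence
    intro j _ a ha b hb hadj
    have hra : rnk G s c a = j := (mem_P_iff hex a j).1 ha
    have hrb : rnk G s c b = j := (mem_P_iff hex b j).1 hb
    have := heeq a
    rw [eeqc, eeqf, Finset.card_eq_zero, Finset.filter_eq_empty_iff] at this
    exact this (Finset.mem_univ b) ⟨hadj, by omega⟩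
  · -- previous-part neighbour
    intro j hj1 hjK a ha
    obtain ⟨m, rfl⟩ : ∃ m, j = m + 1 := ⟨j - 1, by omega⟩
    simp only [Nat.add_sub_cancel]
    have hra : rnk G s c a = m + 1 := (mem_P_iff hex a _).1 ha
    have haC1 : a ∈ canonTopCum G s c (m + 1) := hra ▸ rnk_spec hex a
    have haC0 : a ∉ canonTopCum G s c m := by rw [mem_C_iff_rnk hex]; omega
    have hcond : (G.degree a : ℤ) ≤ (c a : ℤ)
        + (((canonTopCum G s c m).filter (G.Adj a)).card : ℤ) := by
      rcases (mem_C_succ_iff G s c a m).1 haC1 with h | ⟨-, h⟩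
      · exact absurd h haC0
      · exact h
    by_contra hno
    push_neg at hno
    cases m with
    | zero =>
      have hadjs : ¬ G.Adj a s := fun h => hno s (by
        rw [canonTopPart]; exact Finset.mem_singleton_self s) h
      have : (canonTopCum G s c 0).filter (G.Adj a) = ∅ := by
        rw [canonTopCum, Finset.filter_eq_empty_iff]
        intro b hb
        rw [Finset.mem_singleton] at hb
        subst hb
        exact hadjs
      rw [this] at hcond
      have hane : a ≠ s := by
        intro h
        subst h
        rw [canonTopCum, Finset.mem_singleton] at haC0
        exact haC0 rfl
      have := hstab a hane
      simp at hcond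
      omega
    | succ m' =>
      have haC2 : a ∉ canonTopCum G s c m' :=
        fun h => haC0 (C_mono G s c (by omega) h)
      have hcond2 : ¬ ((G.degree a : ℤ) ≤ (c a : ℤ)
          + (((canonTopCum G s c m').filter (G.Adj a)).card : ℤ)) := by
        intro h
        exact haC0 ((mem_C_succ_iff G s c a m').2 (Or.inr ⟨haC2, h⟩))
      have hfe : (canonTopCum G s c (m' + 1)).filter (G.Adj a)
          = (canonTopCum G s c m').filter (G.Adj a) := by
        apply Finset.Subset.antisymm
        · intro b hb
          rw [Finset.mem_filter] at hb
          rcases (mem_C_succ_iff G s c b m').1 hb.1 with h | ⟨hb2, _⟩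
          · exact Finset.mem_filter.2 ⟨h, hb.2⟩
          · exfalso
            refine hno b ?_ hb.2
            rw [canonTopPart, Finset.mem_sdiff]
            exact ⟨hb.1, hb2⟩
        · exact Finset.filter_subset_filter _ (C_subset_succ G s c m')
      rw [hfe] at hcond
      exact hcond2 hcond

end Forward

section Inj
variable {n : ℕ} {G : SimpleGraph (Fin n)} {s : Fin n}

lemma inj_aux {c c' : Fin n → ℕ} (hrec : IsRecurrent G s c) (hlev : level G c = 0)
    (hrec' : IsRecurrent G s c') (hlev' : level G c' = 0)
    (hP : canonTopPart G s c = canonTopPart G s c') : c = c' := by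
  have hex := exhaust hrec
  have hex' := exhaust hrec'
  have hCC : canonTopCum G s c = canonTopCum G s c' := by
    funext k
    rw [C_eq_biUnion, C_eq_biUnion, hP]
  have hr : rnk G s c = rnk G s c' := by
    funext v
    rw [rnk, rnk, hCC]
  have h1 := (minimal_structure hex hrec.1 hlev).2
  have h2 := (minimal_structure hex' hrec'.1 hlev').2
  funext v
  have e1 := h1 v
  have e2 := h2 v
  rw [eltc, hr] at e1
  rw [eltc] at e2
  have : (c v : ℤ) = (c' v : ℤ) := by rw [e1, e2]
  exact_mod_cast this

end Inj

noncomputable def prk {n : ℕ} (P : ℕ → Finset (Fin n)) (v : Fin n) : ℕ :=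
  if h : ∃ j, v ∈ P j then Nat.find h else 0

noncomputable def conf {n : ℕ} (G : SimpleGraph (Fin n)) (P : ℕ → Finset (Fin n))
    (v : Fin n) : ℕ :=
  G.degree v - eltf G (prk P) v

section Surj
variable {n : ℕ} {G : SimpleGraph (Fin n)} {s : Fin n} {P : ℕ → Finset (Fin n)} {k : ℕ}

lemma exists_part (hc : IsCompatG G s P k) (v : Fin n) : ∃ j, v ∈ P j := by
  have hv : v ∈ (Finset.range (k+1)).biUnion P := by
    rw [hc.2.2.2.2.1]; exact Finset.mem_univ v
  obtain ⟨j, -, hj⟩ := Finset.mem_biUnion.1 hv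
  exact ⟨j, hj⟩

lemma part_unique (hc : IsCompatG G s P k) {v : Fin n} {i j : ℕ}
    (hi : v ∈ P i) (hj : v ∈ P j) : i = j := by
  rcases lt_trichotomy i j with h | h | h
  · exact (Finset.disjoint_left.1 (hc.2.2.2.1 i j h) hi hj).elim
  · exact h
  · exact (Finset.disjoint_left.1 (hc.2.2.2.1 j i h) hj hi).elim

lemma prk_mem (hc : IsCompatG G s P k) (v : Fin n) : v ∈ P (prk P v) := by
  rw [prk, dif_pos (exists_part hc v)]
  exact Nat.find_spec (exists_part hc v)

lemma mem_P_iff' (hc : IsCompatG G s P k) {v : Fin n} {j : ℕ} :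
    v ∈ P j ↔ prk P v = j :=
  ⟨fun h => part_unique hc (prk_mem hc v) h, fun h => h ▸ prk_mem hc v⟩

lemma prk_le (hc : IsCompatG G s P k) (v : Fin n) : prk P v ≤ k := by
  by_contra h
  push_neg at h
  have := prk_mem hc v
  rw [hc.2.2.1 _ h] at this
  exact absurd this (Finset.notMem_empty v)

lemma prk_s (hc : IsCompatG G s P k) : prk P s = 0 :=
  (mem_P_iff' hc).1 (by rw [hc.1]; exact Finset.mem_singleton_self s)

lemma prk_zero_iff (hc : IsCompatG G s P k) {v : Fin n} : prk P v = 0 ↔ v = s := by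
  constructor
  · intro h
    have := prk_mem hc v
    rw [h, hc.1, Finset.mem_singleton] at this
    exact this
  · rintro rfl; exact prk_s hc

lemma eltf_le_deg {r : Fin n → ℕ} (v : Fin n) : eltf G r v ≤ G.degree v := by
  rw [eltf, ← SimpleGraph.card_neighborFinset_eq_degree, SimpleGraph.neighborFinset_eq_filter]
  apply Finset.card_le_card
  intro u hu
  rw [Finset.mem_filter] at hu ⊢
  exact ⟨hu.1, hu.2.1⟩

lemma conf_cast (v : Fin n) :
    (conf G P v : ℤ) = (G.degree v : ℤ) - (eltf G (prk P) v : ℤ) := by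
  rw [conf]
  push_cast [Nat.cast_sub (eltf_le_deg v)]
  ring

lemma mem_U (hc : IsCompatG G s P k) (v : Fin n) (j : ℕ) :
    v ∈ (Finset.range (j+1)).biUnion P ↔ prk P v ≤ j := by
  rw [Finset.mem_biUnion]
  constructor
  · rintro ⟨i, hi, hv⟩
    rw [Finset.mem_range] at hi
    rw [(mem_P_iff' hc).1 hv]
    omega
  · intro h
    exact ⟨prk P v, Finset.mem_range.2 (by omega), prk_mem hc v⟩

lemma UfilterAdj (hc : IsCompatG G s P k) (v : Fin n) (j : ℕ) :
    ((Finset.range (j+1)).biUnion P).filter (G.Adj v)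
      = Finset.univ.filter (fun u => G.Adj v u ∧ prk P u ≤ j) := by
  ext u
  simp only [Finset.mem_filter, Finset.mem_univ, true_and, mem_U hc]
  tauto

lemma C_eq_U (hc : IsCompatG G s P k) (j : ℕ) :
    canonTopCum G s (conf G P) j = (Finset.range (j+1)).biUnion P := by
  induction j with
  | zero =>
    rw [canonTopCum]
    simp [hc.1]
  | succ j ih =>
    apply Finset.Subset.antisymm
    · intro x hx
      rcases (mem_C_succ_iff G s (conf G P) x j).1 hx with h | ⟨hnot, hcond⟩
      · rw [ih, mem_U hc] at h
        rw [mem_U hc]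
        omega
      · rw [ih, mem_U hc] at hnot
        rw [ih, UfilterAdj hc] at hcond
        rw [conf_cast] at hcond
        set m := prk P x with hm
        have hmj : j + 1 ≤ m := by omega
        have hle : eltf G (prk P) x
            ≤ (Finset.univ.filter (fun u => G.Adj x u ∧ prk P u ≤ j)).card := by
          have := hcond
          omega
        have hsub : Finset.univ.filter (fun u => G.Adj x u ∧ prk P u ≤ j)
            ⊆ Finset.univ.filter (fun u => G.Adj x u ∧ prk P u < m) := by
          intro u hu
          rw [Finset.mem_filter] at hu ⊢
          exact ⟨hu.1, hu.2.1, by omega⟩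
        have heqset : Finset.univ.filter (fun u => G.Adj x u ∧ prk P u ≤ j)
            = Finset.univ.filter (fun u => G.Adj x u ∧ prk P u < m) :=
          Finset.eq_of_subset_of_card_le hsub (by rw [eltf] at hle; exact hle)
        have hmeq : m = j + 1 := by
          by_contra hne
          have hm2 : j + 2 ≤ m := by omega
          obtain ⟨b, hb, hadj⟩ := hc.2.2.2.2.2.2 m (by omega) (by
            have := prk_le hc x
            omega) x (prk_mem hc x)
          have hrb : prk P b = m - 1 := (mem_P_iff' hc).1 hb
          have hbin : b ∈ Finset.univ.filter (fun u => G.Adj x u ∧ prk P u < m) :=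
            Finset.mem_filter.2 ⟨Finset.mem_univ b, hadj, by omega⟩
          rw [← heqset, Finset.mem_filter] at hbin
          omega
        rw [mem_U hc]
        omega
    · intro x hx
      rw [mem_U hc] at hx
      rcases Nat.lt_or_ge (prk P x) (j+1) with h | h
      · exact C_subset_succ G s (conf G P) j (by rw [ih, mem_U hc]; omega)
      · have hmx : prk P x = j + 1 := by omega
        apply (mem_C_succ_iff G s (conf G P) x j).2
        refine Or.inr ⟨by rw [ih, mem_U hc]; omega, ?_⟩
        rw [ih, UfilterAdj hc, conf_cast]
        have hfe : Finset.univ.filter (fun u => G.Adj x u ∧ prk P u ≤ j)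
            = Finset.univ.filter (fun u => G.Adj x u ∧ prk P u < prk P x) := by
          ext u
          simp only [Finset.mem_filter, Finset.mem_univ, true_and, hmx]
          constructor
          · rintro ⟨h1, h2⟩; exact ⟨h1, by omega⟩
          · rintro ⟨h1, h2⟩; exact ⟨h1, by omega⟩
        rw [hfe, ← eltf]
        omega
end Surj

section Surj2
variable {n : ℕ} {G : SimpleGraph (Fin n)} {s : Fin n} {P : ℕ → Finset (Fin n)} {k : ℕ}

lemma canonPart_eq (hc : IsCompatG G s P k) : canonTopPart G s (conf G P) = P := by
  funext j
  cases j with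
  | zero => rw [canonTopPart, hc.1]
  | succ m =>
    rw [canonTopPart, C_eq_U hc, C_eq_U hc]
    ext x
    rw [Finset.mem_sdiff, mem_U hc, mem_U hc, mem_P_iff' hc]
    omega

lemma eeq_zero (hc : IsCompatG G s P k) (v : Fin n) : eeqf G (prk P) v = 0 := by
  rw [eeqf, Finset.card_eq_zero, Finset.filter_eq_empty_iff]
  rintro u - ⟨hadj, heq⟩
  exact hc.2.2.2.2.2.1 (prk P v) (prk_le hc v) v (prk_mem hc v) u
    (by rw [mem_P_iff' hc]; exact heq) hadj

lemma level_zero (hc : IsCompatG G s P k) : level G (conf G P) = 0 := by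
  rw [level]
  have h1 : ∑ v, (conf G P v : ℤ)
      = ∑ v, ((G.degree v : ℤ) - (eltf G (prk P) v : ℤ)) :=
    Finset.sum_congr rfl (fun v _ => conf_cast v)
  have hdeg : ∑ v, (G.degree v : ℤ) = 2 * (G.edgeFinset.card : ℤ) := by
    have := SimpleGraph.sum_degrees_eq_twice_card_edges G
    exact_mod_cast congrArg (Nat.cast : ℕ → ℤ) this
  have h3 : ∀ v, (eltf G (prk P) v : ℤ) + eeqf G (prk P) v + egtf G (prk P) v
      = G.degree v := fun v =>
    by exact_mod_cast congrArg (Nat.cast : ℕ → ℤ) (elt_add_eq_deg (G := G) (r := prk P) v)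
  have h4 : ∑ v, (eltf G (prk P) v : ℤ) = ∑ v, (egtf G (prk P) v : ℤ) := by
    exact_mod_cast congrArg (Nat.cast : ℕ → ℤ) (sum_elt_eq_sum_egt (G := G) (r := prk P))
  have h5 : ∑ v, ((eltf G (prk P) v : ℤ) + eeqf G (prk P) v + egtf G (prk P) v)
      = 2 * (G.edgeFinset.card : ℤ) := by
    rw [Finset.sum_congr rfl (fun v _ => h3 v), hdeg]
  have h6 : ∑ v, (eeqf G (prk P) v : ℤ) = 0 := by
    rw [Finset.sum_congr rfl (fun v _ => by rw [eeq_zero hc v]; rfl : ∀ v ∈ Finset.univ,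
      ((eeqf G (prk P) v : ℤ) = 0))]
    simp
  rw [Finset.sum_add_distrib, Finset.sum_add_distrib] at h5
  rw [h1, Finset.sum_sub_distrib, hdeg]
  linarith

lemma conf_recurrent (hc : IsCompatG G s P k) : IsRecurrent G s (conf G P) := by
  have hconfs : conf G P s = G.degree s := by
    have h0 : eltf G (prk P) s = 0 := by
      rw [eltf, Finset.card_eq_zero, Finset.filter_eq_empty_iff]
      rintro u - ⟨-, hlt⟩
      rw [prk_s hc] at hlt
      omega
    rw [conf, h0]
    omega
  refine ⟨hconfs, ?_, ?_⟩
  · intro v hv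
    have hj := prk_mem hc v
    have hjne : prk P v ≠ 0 := fun h => hv ((prk_zero_iff hc).1 h)
    obtain ⟨b, hb, hadj⟩ := hc.2.2.2.2.2.2 (prk P v) (by omega) (prk_le hc v) v hj
    have hrb : prk P b = prk P v - 1 := (mem_P_iff' hc).1 hb
    have hpos : 0 < eltf G (prk P) v := by
      rw [eltf, Finset.card_pos]
      exact ⟨b, Finset.mem_filter.2 ⟨Finset.mem_univ b, hadj, by omega⟩⟩
    have hle := eltf_le_deg (G := G) (r := prk P) v
    rw [conf]
    omega
  · set l := (List.range (k+1)).flatMap (fun j => (P j).sort (· ≤ ·)) with hl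
    have hmem : ∀ v, v ∈ l := by
      intro v
      rw [hl, List.mem_flatMap]
      exact ⟨prk P v, List.mem_range.2 (by have := prk_le hc v; omega),
        (Finset.mem_sort _).2 (prk_mem hc v)⟩
    have hnd : l.Nodup := by
      rw [hl, List.nodup_flatMap]
      refine ⟨fun j _ => Finset.sort_nodup _ _, ?_⟩
      refine (List.pairwise_lt_range (n := k+1)).imp ?_
      intro i j hij x hxi hxj
      rw [Finset.mem_sort] at hxi hxj
      exact Finset.disjoint_left.1 (hc.2.2.2.1 i j hij) hxi hxj
    have hpair : l.Pairwise (fun a b => prk P a ≤ prk P b) := by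
      rw [hl, List.flatMap_def, List.pairwise_flatten]
      constructor
      · intro l' hl'
        rw [List.mem_map] at hl'
        obtain ⟨j, -, rfl⟩ := hl'
        apply List.pairwise_of_forall_mem_list
        intro a ha b hb
        rw [Finset.mem_sort] at ha hb
        rw [(mem_P_iff' hc).1 ha, (mem_P_iff' hc).1 hb]
      · rw [List.pairwise_map]
        refine (List.pairwise_lt_range (n := k+1)).imp ?_
        intro i j hij x hxi y hyj
        rw [Finset.mem_sort] at hxi hyj
        rw [(mem_P_iff' hc).1 hxi, (mem_P_iff' hc).1 hyj]
        omega
    have hhead : l.head? = some s := by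
      rw [hl, List.range_succ_eq_map, List.flatMap_cons, hc.1, Finset.sort_singleton,
        List.singleton_append]
      rfl
    have hvalid : ValidTopplings G (conf G P) l := by
      apply valid_of _ l hnd
      intro l1 v l2 hdec
      have hv2 : ∀ u ∈ l2, prk P v ≤ prk P u := by
        have hp := hpair
        rw [hdec, List.pairwise_append] at hp
        exact fun u hu => (List.pairwise_cons.1 hp.2.1).1 u hu
      have hnd' := hnd
      rw [hdec] at hnd'
      have hsub : Finset.univ.filter (fun u => G.Adj v u ∧ prk P u < prk P v)
          ⊆ l1.toFinset.filter (fun u => G.Adj u v) := by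
        intro u hu
        rw [Finset.mem_filter] at hu
        obtain ⟨-, hadj, hlt⟩ := hu
        have hul : u ∈ l := hmem u
        rw [hdec, List.mem_append, List.mem_cons] at hul
        rcases hul with h | h | h
        · exact Finset.mem_filter.2 ⟨List.mem_toFinset.2 h, G.adj_symm hadj⟩
        · subst h; omega
        · exact absurd (hv2 u h) (by omega)
      have hnd1 : l1.Nodup := (List.nodup_append.1 hnd').1
      have hcount : (l1.filter (fun i => G.Adj i v)).length
          = (l1.toFinset.filter (fun u => G.Adj u v)).card := by
        rw [← List.toFinset_card_of_nodup (hnd1.filter _)]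
        congr 1
        ext u
        simp [List.mem_filter]
      have hkey : eltf G (prk P) v ≤ (l1.filter (fun i => G.Adj i v)).length := by
        rw [hcount, eltf]
        exact Finset.card_le_card hsub
      have hle := eltf_le_deg (G := G) (r := prk P) v
      rw [conf]
      omega
    exact ⟨l, hhead, hnd, hmem, hvalid, toppleList_eq_self _ l hnd hmem hvalid⟩

end Surj2

/-- the map `c ↦ CanonTop(c)` is a bijection from the minimal recurrent
configurations of the ASM on `G_π` with sink `s` onto the `(π, s)`-compatible ordered
partitions of `[n]`. -/
theorem canonTop_bijOn_minRec {n : ℕ} (π : Equiv.Perm (Fin n)) (s : Fin n) :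
    Set.BijOn (fun c : Fin n → ℕ => canonTopPart (permGraph π) s c)
      {c | IsRecurrent (permGraph π) s c ∧ level (permGraph π) c = 0}
      {P | ∃ k : ℕ, IsCompatiblePartition π s P k} := by
  have hiff : ∀ (Pf : ℕ → Finset (Fin n)) (k : ℕ),
      IsCompatiblePartition π s Pf k ↔ IsCompatG (permGraph π) s Pf k := fun _ _ => Iff.rfl
  refine ⟨?_, ?_, ?_⟩
  · rintro c ⟨hrec, hlev⟩
    obtain ⟨k, hk⟩ := forward_compat hrec hlev
    exact ⟨k, (hiff _ k).2 hk⟩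
  · rintro c ⟨hrec, hlev⟩ c' ⟨hrec', hlev'⟩ h
    exact inj_aux hrec hlev hrec' hlev' h
  · rintro Pf ⟨k, hk⟩
    have hk' := (hiff _ k).1 hk
    exact ⟨conf (permGraph π) Pf, ⟨conf_recurrent hk', level_zero hk'⟩, canonPart_eq hk'⟩
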